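/- Let A be a nonzero complex Banach algebra and let A_e be its unitization with the norm ‖a + λe‖₁ = ‖a‖ + |λ|. Then for every a ∈ A, the numerical range V(A_e, a) = {f(a) : f ∈ D(A_e, e)} equals the closed disk {z ∈ ℂ : |z| ≤ ‖a‖}. -/

import Mathlib

open Unitization WithLp

/-- The element `a` of `A`, viewed as the element `a + 0·e` of the unitization
`A_e = WithLp 1 (Unitization ℂ A)` equipped with the norm `‖a + λe‖₁ = ‖a‖ + |λ|`. -/
noncomputable def inrL1 {A : Type*} [NonUnitalNormedRing A] [NormedSpace ℂ A] (a : A) :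
    WithLp 1 (Unitization ℂ A) :=
  (WithLp.equiv 1 (Unitization ℂ A)).symm (Unitization.inr a)

/-- The functional `φ∞ : a + λ·e ↦ λ` on the ℓ¹-unitization, as a continuous linear map. -/
noncomputable def phiInf (A : Type*) [NonUnitalNormedRing A] [NormedSpace ℂ A]
    [IsScalarTower ℂ A A] [SMulCommClass ℂ A A] :
    WithLp 1 (Unitization ℂ A) →L[ℂ] ℂ :=
  LinearMap.mkContinuous
    ((Unitization.fstHom ℂ A).toLinearMap ∘ₗ (WithLp.linearEquiv 1 ℂ (Unitization ℂ A)).toLinearMap)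
    1
    (fun x => by
      rw [one_mul, WithLp.unitization_norm_def]
      simpa using le_add_of_nonneg_right (norm_nonneg _))

/-- State built from a contractive functional `g` on `A`: `a + λe ↦ λ + g a`. -/
noncomputable def stateOfL1 {A : Type*} [NonUnitalNormedRing A] [NormedSpace ℂ A]
    [IsScalarTower ℂ A A] [SMulCommClass ℂ A A] (g : A →L[ℂ] ℂ) (hg : ‖g‖ ≤ 1) :
    WithLp 1 (Unitization ℂ A) →L[ℂ] ℂ :=
  LinearMap.mkContinuous
    (((Unitization.fstHom ℂ A).toLinearMap + g.toLinearMap ∘ₗ Unitization.sndHom ℂ ℂ A) ∘ₗ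
      (WithLp.linearEquiv 1 ℂ (Unitization ℂ A)).toLinearMap)
    1
    (fun x => by
      rw [one_mul, WithLp.unitization_norm_def]
      simp only [LinearMap.comp_apply, LinearMap.add_apply, AlgHom.toLinearMap_apply,
        LinearEquiv.coe_coe, ContinuousLinearMap.coe_coe]
      refine (norm_add_le _ _).trans (add_le_add ?_ ?_)
      · simp [Unitization.fstHom, WithLp.linearEquiv]; exact le_rfl
      · calc ‖g ((Unitization.sndHom ℂ ℂ A) ((WithLp.linearEquiv 1 ℂ (Unitization ℂ A)) x))‖
            ≤ ‖g‖ * ‖(Unitization.sndHom ℂ ℂ A) ((WithLp.linearEquiv 1 ℂ (Unitization ℂ A)) x)‖ :=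
              g.le_opNorm _
          _ ≤ 1 * _ := by gcongr
          _ = _ := by rw [one_mul]; rfl)

/-- If `A` is a nonzero complex Banach algebra and `A_e` its unitization with the norm
`‖a + λe‖₁ = ‖a‖ + |λ|`, then for every `a ∈ A` the numerical range
`V(A_e, a) = {f(a) : f ∈ D(A_e, e)}` (where `D(A_e, e)` is the set of normalized states,
i.e. continuous linear functionals `f` with `f(e) = ‖f‖ = 1`) equals the closed disk
`{z ∈ ℂ : |z| ≤ ‖a‖}`. -/
theorem numericalRange_of_inr_eq_closedBall
    {A : Type*} [NonUnitalNormedRing A] [NormedSpace ℂ A]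
    [IsScalarTower ℂ A A] [SMulCommClass ℂ A A] [CompleteSpace A] [Nontrivial A] (a : A) :
    {z : ℂ | ∃ f : WithLp 1 (Unitization ℂ A) →L[ℂ] ℂ,
        (f 1 = 1 ∧ ‖f‖ = 1) ∧ f (inrL1 a) = z} =
      {z : ℂ | ‖z‖ ≤ ‖a‖} := by
  have hnorm1 : ‖(1 : WithLp 1 (Unitization ℂ A))‖ = 1 := by
    rw [WithLp.unitization_norm_def]
    show ‖(1 : Unitization ℂ A).fst‖ + ‖(1 : Unitization ℂ A).snd‖ = 1
    simp
  have hinr : ‖inrL1 a‖ = ‖a‖ := by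
    rw [inrL1, WithLp.unitization_norm_def]; simp
  ext z
  simp only [Set.mem_setOf_eq]
  constructor
  · rintro ⟨f, ⟨hf1, hfn⟩, rfl⟩
    calc ‖f (inrL1 a)‖ ≤ ‖f‖ * ‖inrL1 a‖ := f.le_opNorm _
      _ = ‖a‖ := by rw [hfn, one_mul, hinr]
  · intro hz
    -- obtain g with ‖g‖ ≤ 1 and g a = z
    obtain ⟨g, hgn, hga⟩ : ∃ g : A →L[ℂ] ℂ, ‖g‖ ≤ 1 ∧ g a = z := by
      rcases eq_or_ne a 0 with rfl | ha
      · have hz0 : z = 0 := norm_eq_zero.mp (le_antisymm (by simpa using hz) (norm_nonneg z))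
        exact ⟨0, by simp, by simp [hz0]⟩
      · obtain ⟨g₀, hg₀n, hg₀a⟩ := exists_dual_vector ℂ a (norm_ne_zero_iff.mpr ha)
        refine ⟨(z / ‖a‖) • g₀, ?_, ?_⟩
        · have := norm_smul (z / (‖a‖ : ℂ)) g₀
          rw [this, hg₀n, mul_one, norm_div]
          simp only [Complex.norm_real, Real.norm_eq_abs, abs_norm]
          exact div_le_one_of_le₀ hz (norm_nonneg a)
        · have hna : ((‖a‖ : ℂ)) ≠ 0 := by
            exact_mod_cast (norm_ne_zero_iff.mpr ha)
          simp only [ContinuousLinearMap.smul_apply, hg₀a, smul_eq_mul]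
          field_simp
          rfl
    refine ⟨stateOfL1 g hgn, ⟨?_, ?_⟩, ?_⟩
    · show _ = (1 : ℂ)
      simp only [stateOfL1, LinearMap.mkContinuous_apply, LinearMap.comp_apply,
        LinearMap.add_apply, AlgHom.toLinearMap_apply, LinearEquiv.coe_coe,
        ContinuousLinearMap.coe_coe]
      show (1 : Unitization ℂ A).fst + g (1 : Unitization ℂ A).snd = 1
      simp
    · refine le_antisymm (LinearMap.mkContinuous_norm_le _ zero_le_one _) ?_
      have h1 : (stateOfL1 g hgn) 1 = 1 := by
        simp only [stateOfL1, LinearMap.mkContinuous_apply, LinearMap.comp_apply,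
          LinearMap.add_apply, AlgHom.toLinearMap_apply, LinearEquiv.coe_coe,
          ContinuousLinearMap.coe_coe]
        show (1 : Unitization ℂ A).fst + g (1 : Unitization ℂ A).snd = 1
        simp
      have := (stateOfL1 g hgn).le_opNorm 1
      rw [h1, hnorm1, mul_one] at this
      simpa using this
    · show _ = z
      simp [stateOfL1, LinearMap.mkContinuous_apply, inrL1, Unitization.fstHom,
        WithLp.linearEquiv, hga]
      exact Unitization.fst_inr ℂ a
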